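/- Let n ≥ 2 be a natural number and let N be any subspace of c with dimension < n. Then sup{inf{‖σ(x) − y‖_∞ : y ∈ N} : x ∈ ℓ¹, ‖x‖₁ ≤ 1} ≥ 1/2. (Consequently the n-th Kolmogorov number of σ satisfies d_n(σ) ≥ 1/2.) -/

import Mathlib

noncomputable section

/-- The space `ℓ¹` of absolutely summable real sequences. -/
abbrev ell1 : Type := lp (fun _ : ℕ => ℝ) 1

/-- The space `ℓ^∞` of bounded real sequences with the supremum norm. -/
abbrev ellInf : Type := lp (fun _ : ℕ => ℝ) ⊤

/-- The subspace of `ℓ^∞` consisting of convergent sequences. -/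
def convSubspace : Submodule ℝ ellInf where
  carrier := {x | ∃ L : ℝ, Filter.Tendsto (fun k => x k) Filter.atTop (nhds L)}
  add_mem' := by
    rintro x y ⟨L, hL⟩ ⟨M, hM⟩
    exact ⟨L + M, by simpa [lp.coeFn_add, Pi.add_apply] using hL.add hM⟩
  zero_mem' :=
    ⟨0, by simpa [lp.coeFn_zero] using
      (tendsto_const_nhds : Filter.Tendsto (fun _ : ℕ => (0:ℝ)) _ _)⟩
  smul_mem' := by
    rintro c x ⟨L, hL⟩
    exact ⟨c * L, by simpa [lp.coeFn_smul, Pi.smul_apply, smul_eq_mul] using hL.const_mul c⟩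

/-- The space `c` of convergent real sequences, normed by the supremum norm. -/
abbrev cSpace : Type := ↥convSubspace

/-- `σ` is the summation operator: `σ(x)ₖ = ∑_{j=1}^k x_j` (`0`-indexed here). -/
def IsSummation (σ : ell1 →L[ℝ] cSpace) : Prop :=
  ∀ x : ell1, ∀ k : ℕ, (↑(σ x) : ellInf) k = ∑ j ∈ Finset.range (k + 1), x j

open Filter Topology

set_option maxHeartbeats 1000000
set_option synthInstance.maxHeartbeats 400000

/-- coordinate bound in `cSpace` -/
lemma coord_le_norm (z : cSpace) (k : ℕ) : |(↑z : ellInf) k| ≤ ‖z‖ := by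
  calc |(↑z : ellInf) k| = ‖(↑z : ellInf) k‖ := (Real.norm_eq_abs _).symm
    _ ≤ ‖(↑z : ellInf)‖ :=
      lp.norm_apply_le_norm (E := fun _ : ℕ => ℝ) ENNReal.top_ne_zero (↑z : ellInf) k
    _ = ‖z‖ := rfl

/-- Lower bound for the Kolmogorov numbers of the summation operator: for any subspace
`N ⊆ c` with `dim N < n` (`n ≥ 2`), the deviation of `σ(B_{ℓ¹})` from `N` is `≥ 1/2`. -/
theorem kolmogorov_lower_bound_summation (n : ℕ) (hn : 2 ≤ n)
    (σ : ell1 →L[ℝ] cSpace) (hσ : IsSummation σ)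
    (N : Submodule ℝ cSpace) (hN : Module.rank ℝ N < (n : Cardinal)) :
    1 / 2 ≤ sSup {s : ℝ | ∃ x : ell1, ‖x‖ ≤ 1 ∧
      s = sInf {d : ℝ | ∃ y ∈ N, d = ‖σ x - y‖}} := by
  classical
  set S : Set ℝ := {s : ℝ | ∃ x : ell1, ‖x‖ ≤ 1 ∧
      s = sInf {d : ℝ | ∃ y ∈ N, d = ‖σ x - y‖}} with hSdef
  by_contra hcon
  push_neg at hcon
  -- the unit vectors of ℓ¹
  set e : ℕ → ell1 := fun m => lp.single 1 m (1 : ℝ) with he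
  have hnorme : ∀ m, ‖e m‖ = 1 := by
    intro m
    have := lp.norm_single (p := 1) (E := fun _ : ℕ => ℝ) (by norm_num)
      m (1 : ℝ)
    simpa [he] using this
  have hσe : ∀ m k : ℕ, (↑(σ (e m)) : ellInf) k = if m ≤ k then 1 else 0 := by
    intro m k
    rw [hσ (e m) k]
    have h1 : ∀ j, (e m : ∀ _ : ℕ, ℝ) j = if j = m then (1 : ℝ) else 0 := by
      intro j
      by_cases h : j = m
      · subst h; simp [he, lp.single_apply_self]
      · simp [he, lp.single_apply_ne 1 m _ h, h]
    rw [Finset.sum_congr rfl fun j _ => h1 j]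
    simp [Finset.sum_ite_eq', Finset.mem_range, Nat.lt_succ_iff]
  -- basic facts about the distance sets
  have hdne : ∀ x : ell1, ({d : ℝ | ∃ y ∈ N, d = ‖σ x - y‖}).Nonempty := by
    intro x; exact ⟨‖σ x - 0‖, 0, N.zero_mem, rfl⟩
  have hdbdd : ∀ x : ell1, BddBelow {d : ℝ | ∃ y ∈ N, d = ‖σ x - y‖} := by
    intro x; exact ⟨0, by rintro d ⟨y, -, rfl⟩; exact norm_nonneg _⟩
  -- S is bounded above by ‖σ‖
  have hSbdd : BddAbove S := by
    refine ⟨‖σ‖, ?_⟩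
    rintro s ⟨x, hx, rfl⟩
    have h0 : ‖σ x - 0‖ ∈ {d : ℝ | ∃ y ∈ N, d = ‖σ x - y‖} := ⟨0, N.zero_mem, rfl⟩
    have := csInf_le (hdbdd x) h0
    refine this.trans ?_
    rw [sub_zero]
    calc ‖σ x‖ ≤ ‖σ‖ * ‖x‖ := σ.le_opNorm x
      _ ≤ ‖σ‖ * 1 := mul_le_mul_of_nonneg_left hx (norm_nonneg σ)
      _ = ‖σ‖ := mul_one _
  -- each sInf for `e m` is an element of S, hence ≤ sSup S < 1/2
  obtain ⟨r, hrlt, hSr⟩ : ∃ r : ℝ, r < 1 / 2 ∧ sSup S < r :=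
    ⟨(sSup S + 1 / 2) / 2, by linarith, by linarith⟩
  have hy : ∀ m : ℕ, ∃ y ∈ N, ‖σ (e m) - y‖ < r := by
    intro m
    have hmem : sInf {d : ℝ | ∃ y ∈ N, d = ‖σ (e m) - y‖} ∈ S :=
      ⟨e m, le_of_eq (hnorme m), rfl⟩
    have hle : sInf {d : ℝ | ∃ y ∈ N, d = ‖σ (e m) - y‖} < r :=
      lt_of_le_of_lt (le_csSup hSbdd hmem) hSr
    obtain ⟨d, ⟨y, hyN, rfl⟩, hdr⟩ := exists_lt_of_csInf_lt (hdne (e m)) hle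
    exact ⟨y, hyN, hdr⟩
  choose y hyN hylt using hy
  -- entrywise bounds for the y m
  have hcoord : ∀ m k : ℕ,
      |(if m ≤ k then (1:ℝ) else 0) - (↑(y m) : ellInf) k| ≤ r := by
    intro m k
    have h1 : (↑(σ (e m) - y m) : ellInf) k
        = (↑(σ (e m)) : ellInf) k - (↑(y m) : ellInf) k := by
      rw [Submodule.coe_sub]
      simp [lp.coeFn_sub]
    have h2 := coord_le_norm (σ (e m) - y m) k
    rw [h1, hσe m k] at h2
    exact h2.trans (hylt m).le
  -- N is finite dimensional, hence proper; extract a convergent subsequence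
  have hfin : Module.Finite ℝ ↥N :=
    Module.rank_lt_aleph0_iff.mp (hN.trans (Cardinal.nat_lt_aleph0 n))
  haveI : FiniteDimensional ℝ ↥N := hfin
  have hbnd : ∀ m, (⟨y m, hyN m⟩ : ↥N) ∈ Metric.closedBall (0 : ↥N) (‖σ‖ + |r|) := by
    intro m
    rw [Metric.mem_closedBall, dist_zero_right]
    have h1 : ‖(⟨y m, hyN m⟩ : ↥N)‖ = ‖y m‖ := rfl
    change ‖y m‖ ≤ ‖σ‖ + |r|
    have h2 : ‖y m‖ ≤ ‖σ (e m)‖ + ‖σ (e m) - y m‖ := by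
      have heq : y m = σ (e m) - (σ (e m) - y m) := by abel
      conv_lhs => rw [heq]
      exact norm_sub_le _ _
    have h4 : ‖σ (e m)‖ ≤ ‖σ‖ := by
      calc ‖σ (e m)‖ ≤ ‖σ‖ * ‖e m‖ := σ.le_opNorm (e m)
        _ = ‖σ‖ := by rw [hnorme m, mul_one]
    have h5 : ‖σ (e m) - y m‖ ≤ |r| := (hylt m).le.trans (le_abs_self r)
    linarith
  obtain ⟨a, -, φ, hφ, hconv⟩ :=
    tendsto_subseq_of_bounded Metric.isBounded_closedBall hbnd
  -- convergence in cSpace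
  have hconv2 : Tendsto (fun j => y (φ j)) atTop (𝓝 (↑a : cSpace)) := by
    have hc : Continuous (fun z : ↥N => (z : cSpace)) := continuous_subtype_val
    exact (hc.tendsto a).comp hconv
  have hnormconv : Tendsto (fun j => ‖y (φ j) - (↑a : cSpace)‖) atTop (𝓝 0) := by
    rw [← tendsto_sub_nhds_zero_iff] at hconv2
    simpa using hconv2.norm
  -- the limit sequence w and its coordinates
  set w : cSpace := (↑a : cSpace) with hw
  have hcoordconv : ∀ k : ℕ,
      Tendsto (fun j => (↑(y (φ j)) : ellInf) k) atTop (𝓝 ((↑w : ellInf) k)) := by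
    intro k
    rw [tendsto_iff_dist_tendsto_zero]
    refine squeeze_zero (fun j => dist_nonneg) (fun j => ?_) hnormconv
    have h1 : (↑(y (φ j) - w) : ellInf) k
        = (↑(y (φ j)) : ellInf) k - (↑w : ellInf) k := by
      rw [Submodule.coe_sub]; simp [lp.coeFn_sub]
    have := coord_le_norm (y (φ j) - w) k
    rw [h1] at this
    simpa [Real.dist_eq] using this
  -- every coordinate of w is ≤ r in absolute value
  have hwk : ∀ k : ℕ, |(↑w : ellInf) k| ≤ r := by
    intro k
    refine le_of_tendsto (hcoordconv k).abs ?_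
    filter_upwards [eventually_ge_atTop (k + 1)] with j hj
    have hk : ¬ φ j ≤ k := by
      have : j ≤ φ j := hφ.le_apply
      omega
    have := hcoord (φ j) k
    rw [if_neg hk] at this
    simpa [abs_sub_comm] using this
  -- the limit L of w satisfies L ≤ r and 1 - r ≤ L
  obtain ⟨L, hL⟩ := w.2
  have hLle : L ≤ r := by
    refine le_of_tendsto hL ?_
    exact Eventually.of_forall fun k => (le_abs_self _).trans (hwk k)
  have hLge : ∀ δ : ℝ, 0 < δ → 1 - r ≤ L + δ := by
    intro δ hδ
    obtain ⟨j, hj⟩ := Metric.tendsto_atTop.mp hconv2 δ hδ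
    have hjd : ‖y (φ j) - w‖ < δ := by
      rw [← dist_eq_norm]; exact hj j le_rfl
    have hge : ∀ k, φ j ≤ k → 1 - r - δ ≤ (↑w : ellInf) k := by
      intro k hk
      have h1 := hcoord (φ j) k
      rw [if_pos hk] at h1
      have h2 : 1 - r ≤ (↑(y (φ j)) : ellInf) k := by
        have := abs_le.mp h1
        linarith [this.2]
      have h3 : |(↑(y (φ j)) : ellInf) k - (↑w : ellInf) k| ≤ ‖y (φ j) - w‖ := by
        have h4 : (↑(y (φ j) - w) : ellInf) k
            = (↑(y (φ j)) : ellInf) k - (↑w : ellInf) k := by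
          rw [Submodule.coe_sub]; simp [lp.coeFn_sub]
        have := coord_le_norm (y (φ j) - w) k
        rwa [h4] at this
      have := abs_le.mp h3
      linarith [this.2, hjd]
    have : 1 - r - δ ≤ L := by
      refine ge_of_tendsto hL ?_
      filter_upwards [eventually_ge_atTop (φ j)] with k hk using hge k hk
    linarith
  have h1r : 1 - r ≤ L := le_of_forall_pos_le_add hLge
  linarith
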